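/- No two distinct alphabetic formulas are unifiable: if A and B are 𝒜-formulas with A ≠ B, then there are no substitutions σ, τ with σA = τB. -/

import Mathlib

namespace PC

/-- `{→}`-formulas over a countably infinite set of propositional variables. -/
inductive Fml : Type where
  | var : ℕ → Fml
  | imp : Fml → Fml → Fml
deriving DecidableEq

namespace Fml

/-- Application of a substitution to a formula. -/
def subst (σ : ℕ → Fml) : Fml → Fml
  | var n => σ n
  | imp A B => imp (subst σ A) (subst σ B)

/-- The set of variables of a formula. -/
def fvars : Fml → Finset ℕ
  | var n => {n}
  | imp A B => fvars A ∪ fvars B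

/-- Derivability from a set of axioms by modus ponens and substitution. -/
inductive Deriv (P : Set Fml) : Fml → Prop
  | ax {A : Fml} : A ∈ P → Deriv P A
  | mp {A B : Fml} : Deriv P A → Deriv P (imp A B) → Deriv P B
  | sub {A : Fml} (σ : ℕ → Fml) : Deriv P A → Deriv P (subst σ A)

end Fml

/-- `B̂`: the result of substituting `B` for the variable `x` (= `var 0`) in `x̂`. -/
def hat (xhat B : Fml) : Fml := Fml.subst (fun n => if n = 0 then B else Fml.var n) xhat

/-- `A ∘ B := ((B̂ → B̂) → B̂) → (Â → ((B̂ → B̂) → B̂))`. -/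
def circ (xhat A B : Fml) : Fml :=
  .imp (.imp (.imp (hat xhat B) (hat xhat B)) (hat xhat B))
    (.imp (hat xhat A) (.imp (.imp (hat xhat B) (hat xhat B)) (hat xhat B)))

/-- `A · B := ((A → A) → A) ∘ B`. -/
def dot (xhat A B : Fml) : Fml := circ xhat (.imp (.imp A A) A) B

/-- `Cform i` is the formula `p → (p → … (p → p))` with `i` antecedents `p`,
where `p := var 0`. -/
def Cform : ℕ → Fml
  | 0 => .var 0
  | n + 1 => .imp (.var 0) (Cform n)

/-- The code of the letter `aᵢ` (letters of the alphabet `𝒜 = {a₁, …, a_m}` are the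
elements of `Fin m`, the letter `a : Fin m` standing for `a_{a+1}`): `Cᵢ ∘ p`. -/
def letterCode (xhat : Fml) {m : ℕ} (a : Fin m) : Fml :=
  circ xhat (Cform (a.val + 1)) (.var 0)

/-- Formal alphabetic-formula trees over the alphabet `Fin m`. -/
inductive ATree (m : ℕ) : Type where
  | leaf : Fin m → ATree m
  | node : ATree m → ATree m → ATree m

/-- The word associated with an alphabetic formula. -/
def ATree.word {m : ℕ} : ATree m → List (Fin m)
  | .leaf a => [a]
  | .node l r => l.word ++ r.word

/-- The `{→}`-formula denoted by an alphabetic-formula tree. -/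
def ATree.toFml {m : ℕ} (xhat : Fml) : ATree m → Fml
  | .leaf a => letterCode xhat a
  | .node l r => dot xhat (l.toFml xhat) (r.toFml xhat)

/-- `A` is an alphabetic formula (an `𝒜`-formula). -/
def IsAForm (m : ℕ) (xhat : Fml) (A : Fml) : Prop := ∃ t : ATree m, t.toFml xhat = A

/-- The code `͞α` of a word `α`: the set of all `𝒜`-formulas `A` with `word(A) = α`. -/
def codeSet {m : ℕ} (xhat : Fml) (α : List (Fin m)) : Set Fml :=
  { A | ∃ t : ATree m, t.word = α ∧ t.toFml xhat = A }

/-- `A*`: the set of substitution instances of `A`. -/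
def Inst (A : Fml) : Set Fml := { B | ∃ σ, Fml.subst σ A = B }

/-- `M*`: the set of substitution instances of members of `M`. -/
def InstSet (M : Set Fml) : Set Fml := { B | ∃ A ∈ M, ∃ σ, Fml.subst σ A = B }

/-- A tag system over the alphabet `Fin m`: the words `ω₁, …, ω_m` and the
deletion number `d`. -/
structure TagSystem (m : ℕ) where
  W : Fin m → List (Fin m)
  d : ℕ

/-- One-step production: `ξ ↦_T ζ` iff `ξ = aᵢβγ` with `|β| = d − 1` and `ζ = γωᵢ`. -/
def TagStep {m : ℕ} (T : TagSystem m) (ξ ζ : List (Fin m)) : Prop :=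
  ∃ (i : Fin m) (β γ : List (Fin m)),
    β.length = T.d - 1 ∧ ξ = i :: (β ++ γ) ∧ ζ = γ ++ T.W i

/-- `ξ ⟾_T ζ`: reflexive-transitive closure of one-step production. -/
def TagProd {m : ℕ} (T : TagSystem m) : List (Fin m) → List (Fin m) → Prop :=
  Relation.ReflTransGen (TagStep T)

/-- `T` halts on `ξ`. -/
def TagHalts {m : ℕ} (T : TagSystem m) (ξ : List (Fin m)) : Prop :=
  ∃ ζ, TagProd T ξ ζ ∧ ζ.length < T.d

/-- The variables `x, y, z, u` used in the axiom schemes. -/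
def Xv : Fml := .var 1
def Yv : Fml := .var 2
def Zv : Fml := .var 3
def Uv : Fml := .var 4

/-- The axioms (R₁)–(R₄). -/
def Raxioms (xhat : Fml) : Set Fml :=
  { .imp (dot xhat Xv (dot xhat Yv Zv)) (dot xhat (dot xhat Xv Yv) Zv),
    .imp (dot xhat (dot xhat Xv Yv) Zv) (dot xhat Xv (dot xhat Yv Zv)),
    .imp (dot xhat (dot xhat Xv (dot xhat Yv Zv)) Uv)
      (dot xhat (dot xhat (dot xhat Xv Yv) Zv) Uv),
    .imp (dot xhat (dot xhat (dot xhat Xv Yv) Zv) Uv)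
      (dot xhat (dot xhat Xv (dot xhat Yv Zv)) Uv) }

/-- The axioms (T₁) and (T₂) of `P_T`. -/
def Taxioms {m : ℕ} (xhat : Fml) (T : TagSystem m) : Set Fml :=
  { F | ∃ (i : Fin m) (α : List (Fin m)) (A B : Fml),
      α.length = T.d - 1 ∧ A ∈ codeSet xhat (i :: α) ∧ B ∈ codeSet xhat (T.W i) ∧
      (F = .imp (dot xhat A Xv) (dot xhat Xv B) ∨ F = .imp A B) }

/-- The calculus `P_T`. -/
def PT {m : ℕ} (xhat : Fml) (T : TagSystem m) : Set Fml := Taxioms xhat T ∪ Raxioms xhat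

/-- `P ⊢ A ⇒ B`: there are `C₀ = A, …, C_n = B` with `P ⊢ Cᵢ → Cᵢ₊₁` for all `i`. -/
def DChain (P : Set Fml) : Fml → Fml → Prop :=
  Relation.ReflTransGen (fun C D => Fml.Deriv P (.imp C D))

/-- `T_α`: the set of `𝒜`-formulas `A` with `α ⟾_T word(A)`. -/
def Tset {m : ℕ} (xhat : Fml) (T : TagSystem m) (α : List (Fin m)) : Set Fml :=
  { A | ∃ t : ATree m, t.toFml xhat = A ∧ TagProd T α t.word }

/-- The halting-condition axioms (H) for the calculus `P₀`. -/
def Haxioms {m : ℕ} (xhat : Fml) (T : TagSystem m) (P₀ : Finset Fml) : Set Fml :=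
  { F | ∃ (α : List (Fin m)) (A B : Fml), α ≠ [] ∧ α.length < T.d ∧
      A ∈ codeSet xhat α ∧ B ∈ P₀ ∧ F = .imp A B }

/-- The calculus `P_{T,P₀}`. -/
def PTP0 {m : ℕ} (xhat : Fml) (T : TagSystem m) (P₀ : Finset Fml) : Set Fml :=
  PT xhat T ∪ Haxioms xhat T P₀

/-- The calculus `P_{T,P₀,ξ}`. -/
def PTP0xi {m : ℕ} (xhat : Fml) (T : TagSystem m) (P₀ : Finset Fml)
    (ξ : List (Fin m)) : Set Fml :=
  PT xhat T ∪ Haxioms xhat T P₀ ∪ codeSet xhat ξ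

/-- `⟨P⟩`: formulas obtained from `P` by one application of modus ponens or
substitution. -/
def stepOnce (P : Set Fml) : Set Fml :=
  { B | ∃ A, A ∈ P ∧ Fml.imp A B ∈ P } ∪ { B | ∃ A ∈ P, ∃ σ, Fml.subst σ A = B }

/-- `⟨P⟩_n`. -/
def stepIter (P : Set Fml) : ℕ → Set Fml
  | 0 => P
  | n + 1 => stepOnce (stepIter P n)

/-- The single axiom `x → (y → x)`. -/
def Kax : Fml := .imp (.var 0) (.imp (.var 1) (.var 0))

/-- An effective encoding of `{→}`-formulas as natural numbers. -/
def encFml : Fml → ℕ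
  | .var n => Nat.pair 0 n
  | .imp A B => Nat.pair 1 (Nat.pair (encFml A) (encFml B))

/-- The fixed effective encoding of `{→}`-calculi (finite sets of formulas)
as natural numbers. -/
def encCalc (P : Finset Fml) : ℕ :=
  Encodable.encode ((P.image encFml).sort (· ≤ ·))


/-! ### Auxiliary material for Statement 8 -/

/-- Size of a formula. -/
def fsize : Fml → ℕ
  | .var _ => 1
  | .imp A B => fsize A + fsize B + 1

lemma fsize_pos : ∀ A : Fml, 0 < fsize A
  | .var _ => Nat.one_pos
  | .imp A B => by simp [fsize]

lemma subst_congr {f g : ℕ → Fml} :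
    ∀ A : Fml, (∀ n ∈ A.fvars, f n = g n) → A.subst f = A.subst g
  | .var n, h => h n (by simp [Fml.fvars])
  | .imp A B, h => by
      simp only [Fml.subst, Fml.imp.injEq]
      exact ⟨subst_congr A fun n hn => h n (by simp [Fml.fvars, hn]),
             subst_congr B fun n hn => h n (by simp [Fml.fvars, hn])⟩

lemma eq_of_subst_eq {f g : ℕ → Fml} :
    ∀ A : Fml, A.subst f = A.subst g → ∀ n ∈ A.fvars, f n = g n
  | .var k, h, n, hn => by
      simp [Fml.fvars] at hn; subst hn; exact h
  | .imp A B, h, n, hn => by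
      simp only [Fml.subst, Fml.imp.injEq] at h
      simp only [Fml.fvars, Finset.mem_union] at hn
      rcases hn with hn | hn
      · exact eq_of_subst_eq A h.1 n hn
      · exact eq_of_subst_eq B h.2 n hn

lemma subst_subst (σ f : ℕ → Fml) :
    ∀ A : Fml, (A.subst f).subst σ = A.subst (fun n => (f n).subst σ)
  | .var n => rfl
  | .imp A B => by simp [Fml.subst, subst_subst σ f A, subst_subst σ f B]

variable {xhat : Fml}

lemma hat_inj (hx : xhat.fvars = {0}) {X Y : Fml} (h : hat xhat X = hat xhat Y) :
    X = Y := by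
  have h0 : (0 : ℕ) ∈ xhat.fvars := by simp [hx]
  have := eq_of_subst_eq xhat h 0 h0
  simpa using this

lemma subst_hat (hx : xhat.fvars = {0}) (σ : ℕ → Fml) (C : Fml) :
    (hat xhat C).subst σ = hat xhat (C.subst σ) := by
  unfold hat
  rw [subst_subst]
  apply subst_congr
  intro n hn
  have : n = 0 := by simpa [hx] using hn
  subst this
  simp

lemma subst_circ (hx : xhat.fvars = {0}) (σ : ℕ → Fml) (X Y : Fml) :
    (circ xhat X Y).subst σ = circ xhat (X.subst σ) (Y.subst σ) := by
  simp [circ, Fml.subst, subst_hat hx]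

lemma circ_inj (hx : xhat.fvars = {0}) {X Y X' Y' : Fml}
    (h : circ xhat X Y = circ xhat X' Y') : X = X' ∧ Y = Y' := by
  unfold circ at h
  injection h with hP hR
  injection hR with hX _
  injection hP with _ hY
  exact ⟨hat_inj hx hX, hat_inj hx hY⟩

lemma subst_dot (hx : xhat.fvars = {0}) (σ : ℕ → Fml) (X Y : Fml) :
    (dot xhat X Y).subst σ =
      circ xhat (.imp (.imp (X.subst σ) (X.subst σ)) (X.subst σ)) (Y.subst σ) := by
  rw [dot, subst_circ hx]
  rfl

/-- `Cform n` with `q` substituted for the variable. -/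
def CformS (q : Fml) : ℕ → Fml
  | 0 => q
  | n + 1 => .imp q (CformS q n)

lemma subst_Cform (σ : ℕ → Fml) : ∀ n, (Cform n).subst σ = CformS (σ 0) n
  | 0 => rfl
  | n + 1 => by simp [Cform, Fml.subst, CformS, subst_Cform σ n]

lemma fsize_CformS (q : Fml) : ∀ n, fsize q ≤ fsize (CformS q n)
  | 0 => le_refl _
  | n + 1 => by simp [CformS, fsize]; omega

lemma CformS_inj (q : Fml) : ∀ n k, CformS q n = CformS q k → n = k := by
  intro n
  induction n with
  | zero =>
    intro k h
    cases k with
    | zero => rfl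
    | succ k =>
      exfalso
      have hs : fsize (CformS q 0) = fsize (CformS q (k + 1)) := by rw [h]
      have := fsize_CformS q k
      simp [CformS, fsize] at hs
      have := fsize_pos q
      omega
  | succ n ih =>
    intro k h
    cases k with
    | zero =>
      exfalso
      have hs : fsize (CformS q (n + 1)) = fsize (CformS q 0) := by rw [h]
      have := fsize_CformS q n
      simp [CformS, fsize] at hs
      have := fsize_pos q
      omega
    | succ k =>
      simp only [CformS, Fml.imp.injEq] at h
      rw [ih k h.2]

lemma subst_leaf (hx : xhat.fvars = {0}) {m : ℕ} (σ : ℕ → Fml) (a : Fin m) :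
    (ATree.toFml xhat (.leaf a)).subst σ =
      circ xhat (CformS (σ 0) (a.val + 1)) (σ 0) := by
  show (letterCode xhat a).subst σ = _
  rw [letterCode, subst_circ hx, subst_Cform]
  rfl

lemma leaf_node_absurd (hx : xhat.fvars = {0}) {q D E : Fml} {n : ℕ}
    (h : circ xhat (CformS q (n + 1)) q =
      circ xhat (.imp (.imp D D) D) E) : False := by
  obtain ⟨h1, _⟩ := circ_inj hx h
  simp only [CformS, Fml.imp.injEq] at h1
  obtain ⟨hq, hD⟩ := h1
  have h2 : fsize q ≤ fsize (CformS q n) := fsize_CformS q n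
  rw [hD] at h2
  rw [hq] at h2
  simp [fsize] at h2

lemma key_lemma (hx : xhat.fvars = {0}) {m : ℕ} (σ τ : ℕ → Fml) :
    ∀ t s : ATree m,
      (t.toFml xhat).subst σ = (s.toFml xhat).subst τ →
      t.toFml xhat = s.toFml xhat := by
  intro t
  induction t with
  | leaf a =>
    intro s h
    cases s with
    | leaf b =>
      rw [subst_leaf hx, subst_leaf hx] at h
      obtain ⟨h1, h2⟩ := circ_inj hx h
      rw [h2] at h1
      have := CformS_inj (τ 0) _ _ h1
      have hab : a = b := by
        apply Fin.ext; omega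
      rw [hab]
    | node l r =>
      exfalso
      rw [subst_leaf hx] at h
      rw [show ATree.toFml xhat (.node l r) = dot xhat (l.toFml xhat) (r.toFml xhat) from rfl,
        subst_dot hx] at h
      exact leaf_node_absurd hx h
  | node l r ihl ihr =>
    intro s h
    cases s with
    | leaf b =>
      exfalso
      rw [subst_leaf hx] at h
      rw [show ATree.toFml xhat (.node l r) = dot xhat (l.toFml xhat) (r.toFml xhat) from rfl,
        subst_dot hx] at h
      exact leaf_node_absurd hx h.symm
    | node l' r' =>
      rw [show ATree.toFml xhat (.node l r) = dot xhat (l.toFml xhat) (r.toFml xhat) from rfl,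
        show ATree.toFml xhat (.node l' r') = dot xhat (l'.toFml xhat) (r'.toFml xhat) from rfl,
        subst_dot hx, subst_dot hx] at h
      obtain ⟨h1, h2⟩ := circ_inj hx h
      simp only [Fml.imp.injEq] at h1
      have hl := ihl l' h1.2
      have hr := ihr r' h2
      show dot xhat (l.toFml xhat) (r.toFml xhat) = dot xhat (l'.toFml xhat) (r'.toFml xhat)
      rw [hl, hr]

/-- No two distinct alphabetic formulas are unifiable: if `A` and
`B` are `𝒜`-formulas with `A ≠ B`, then there are no substitutions `σ, τ` with
`σA = τB`. -/
theorem aforms_not_unifiable (xhat : Fml) (hx : xhat.fvars = {0})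
    (m : ℕ) (A B : Fml) (hA : IsAForm m xhat A) (hB : IsAForm m xhat B)
    (hne : A ≠ B) :
    ¬ ∃ σ τ : ℕ → Fml, Fml.subst σ A = Fml.subst τ B := by
  rintro ⟨σ, τ, h⟩
  obtain ⟨t, rfl⟩ := hA
  obtain ⟨s, rfl⟩ := hB
  exact hne (key_lemma hx σ τ t s h)

end PC
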